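/- The map T : 𝔻 × 𝔻 → 𝔻 × 𝔻 defined by T(x,y) = (M(x,y), φ_{M(x,y)}(x)) is a bijection of 𝔻 × 𝔻 onto itself, with inverse given by T^{-1}(m,u) = (φ_m(u), φ_m(−u)). -/

import Mathlib

/-- The open unit disc in the complex plane. -/
def Disc : Set ℂ := {z : ℂ | ‖z‖ < 1}

/-- The geodesic symmetry `φ_a(z) = (a - z)/(1 - conj(a)·z)`. -/
noncomputable def phi (a z : ℂ) : ℂ := (a - z) / (1 - (starRingEnd ℂ) a * z)

lemma normSq_key (w z : ℂ) :
    Complex.normSq (1 - (starRingEnd ℂ) w * z) - Complex.normSq (w - z)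
      = (1 - Complex.normSq w) * (1 - Complex.normSq z) := by
  simp only [Complex.normSq_apply, Complex.mul_re, Complex.mul_im, Complex.sub_re,
    Complex.sub_im, Complex.one_re, Complex.one_im, Complex.conj_re, Complex.conj_im]
  ring

lemma normSq_lt_one {z : ℂ} (hz : z ∈ Disc) : Complex.normSq z < 1 := by
  have h : ‖z‖ < 1 := hz
  nlinarith [Complex.sq_norm z, norm_nonneg z]

lemma abs_lt_denom {w z : ℂ} (hw : w ∈ Disc) (hz : z ∈ Disc) :
    ‖w - z‖ < ‖1 - (starRingEnd ℂ) w * z‖ := by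
  have hkey := normSq_key w z
  have h1 := normSq_lt_one hw
  have h2 := normSq_lt_one hz
  have : Complex.normSq (w - z) < Complex.normSq (1 - (starRingEnd ℂ) w * z) := by
    nlinarith
  rw [Complex.norm_def, Complex.norm_def]
  exact Real.sqrt_lt_sqrt (Complex.normSq_nonneg _) this

lemma denom_pos {w z : ℂ} (hw : w ∈ Disc) (hz : z ∈ Disc) :
    0 < ‖1 - (starRingEnd ℂ) w * z‖ :=
  lt_of_le_of_lt (norm_nonneg _) (abs_lt_denom hw hz)

lemma denom_ne_zero {w z : ℂ} (hw : w ∈ Disc) (hz : z ∈ Disc) :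
    (1 : ℂ) - (starRingEnd ℂ) w * z ≠ 0 := by
  intro h
  have := denom_pos hw hz
  rw [h] at this
  simp at this

lemma phi_mem {a z : ℂ} (ha : a ∈ Disc) (hz : z ∈ Disc) : phi a z ∈ Disc := by
  show ‖phi a z‖ < 1
  rw [phi, norm_div]
  exact (div_lt_one (denom_pos ha hz)).2 (abs_lt_denom ha hz)

lemma phi_phi {a z : ℂ} (ha : a ∈ Disc) (hz : z ∈ Disc) : phi a (phi a z) = z := by
  have h1 := denom_ne_zero ha hz
  have h2 := denom_ne_zero ha ha
  have hd : (1:ℂ) - (starRingEnd ℂ) a * phi a z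
      = (1 - (starRingEnd ℂ) a * a) / (1 - (starRingEnd ℂ) a * z) := by
    rw [phi]; field_simp; ring
  have hn : a - phi a z
      = z * (1 - (starRingEnd ℂ) a * a) / (1 - (starRingEnd ℂ) a * z) := by
    rw [phi, eq_div_iff h1, sub_mul, div_mul_cancel₀ _ h1]; ring
  rw [phi, hd, hn, div_div_div_cancel_right₀ h1, mul_div_assoc, div_self h2, mul_one]

lemma midpoint_eq {a x y : ℂ} (ha : a ∈ Disc) (hx : x ∈ Disc) (hy : y ∈ Disc)
    (h : phi a x = -(phi a y)) :
    2*a + 2*(starRingEnd ℂ) a*(x*y) = (1 + a * (starRingEnd ℂ) a) * (x+y) := by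
  have hdx := denom_ne_zero ha hx
  have hdy := denom_ne_zero ha hy
  rw [phi, phi, neg_div', div_eq_div_iff hdx hdy] at h
  linear_combination h

lemma mp_unique12 {a b x y : ℂ} (ha : a ∈ Disc) (hb : b ∈ Disc)
    (hx : x ∈ Disc) (hy : y ∈ Disc)
    (hEa : 2*a + 2*(starRingEnd ℂ) a*(x*y) = (1 + a * (starRingEnd ℂ) a) * (x+y))
    (hEb : 2*b + 2*(starRingEnd ℂ) b*(x*y) = (1 + b * (starRingEnd ℂ) b) * (x+y)) :
    a = b := by
  set ca := (starRingEnd ℂ) a with hca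
  set cb := (starRingEnd ℂ) b with hcb
  set p := x*y with hp
  set s := x+y with hs
  have r1 : (a-b) * (2 - cb * s) = (ca - cb) * (a*s - 2*p) := by
    linear_combination hEa - hEb
  have r2 : (a-b) * (2 - ca * s) = (ca - cb) * (b*s - 2*p) := by
    linear_combination hEa - hEb
  have m1 : (1 + a*ca) * (a*s - 2*p) = 2*(a*a - p) := by
    linear_combination (-a) * hEa
  have m2 : (1 + b*cb) * (2 - cb*s) = 2*(1 - cb*cb*p) := by
    linear_combination cb * hEb
  have m3 : (1 + b*cb) * (b*s - 2*p) = 2*(b*b - p) := by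
    linear_combination (-b) * hEb
  have m4 : (1 + a*ca) * (2 - ca*s) = 2*(1 - ca*ca*p) := by
    linear_combination ca * hEa
  have K1 : (a-b) * ((1 - cb*cb*p) * (1 + a*ca)) = (ca-cb) * ((a*a - p) * (1 + b*cb)) := by
    linear_combination ((1+a*ca)*(1+b*cb)/2) * r1 - ((a-b)*(1+a*ca)/2) * m2
      + ((ca-cb)*(1+b*cb)/2) * m1
  have K2 : (a-b) * ((1 - ca*ca*p) * (1 + b*cb)) = (ca-cb) * ((b*b - p) * (1 + a*ca)) := by
    linear_combination ((1+a*ca)*(1+b*cb)/2) * r2 - ((a-b)*(1+b*cb)/2) * m4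
      + ((ca-cb)*(1+a*ca)/2) * m3
  have hcane : (1 : ℂ) + a*ca ≠ 0 := by
    rw [hca, Complex.mul_conj]
    intro h
    have := normSq_lt_one ha
    have h2 : ((1 + Complex.normSq a : ℝ) : ℂ) = 0 := by push_cast; linear_combination h
    rw [Complex.ofReal_eq_zero] at h2
    nlinarith [Complex.normSq_nonneg a]
  have hcbne : (1 : ℂ) + b*cb ≠ 0 := by
    rw [hcb, Complex.mul_conj]
    intro h
    have := normSq_lt_one hb
    have h2 : ((1 + Complex.normSq b : ℝ) : ℂ) = 0 := by push_cast; linear_combination h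
    rw [Complex.ofReal_eq_zero] at h2
    nlinarith [Complex.normSq_nonneg b]
  have G := congrArg₂ (· * ·) K1 K2
  have G2 : (a-b)^2 * ((1 - cb*cb*p) * (1 - ca*ca*p))
      = (ca-cb)^2 * ((a*a - p) * (b*b - p)) := by
    apply mul_left_cancel₀ (mul_ne_zero hcane hcbne)
    linear_combination G
  by_contra hne
  have hd : a - b ≠ 0 := sub_ne_zero.2 hne
  have habs := congrArg (‖·‖) G2
  simp only [norm_mul, norm_pow] at habs
  have hcd : ‖ca - cb‖ = ‖a - b‖ := by
    rw [hca, hcb, ← map_sub, Complex.norm_conj]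
  rw [hcd] at habs
  have hdpos : 0 < ‖a-b‖ := by
    simpa using norm_pos_iff.2 hd
  have h3 : ‖a-b‖ ^ 2 ≠ 0 := by positivity
  field_simp at habs
  have haa : a*a ∈ Disc := by
    show ‖a*a‖ < 1
    rw [norm_mul]
    have h4 : ‖a‖ < 1 := ha
    nlinarith [norm_nonneg a]
  have hbb : b*b ∈ Disc := by
    show ‖b*b‖ < 1
    rw [norm_mul]
    have h4 : ‖b‖ < 1 := hb
    nlinarith [norm_nonneg b]
  have hpd : p ∈ Disc := by
    show ‖x*y‖ < 1
    rw [norm_mul]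
    have h4 : ‖x‖ < 1 := hx
    have h5 : ‖y‖ < 1 := hy
    nlinarith [norm_nonneg x, norm_nonneg y]
  have l1 : ‖a*a - p‖ < ‖1 - ca*ca*p‖ := by
    have := abs_lt_denom haa hpd
    rwa [map_mul] at this
  have l2 : ‖b*b - p‖ < ‖1 - cb*cb*p‖ := by
    have := abs_lt_denom hbb hpd
    rwa [map_mul] at this
  rw [show cb^2*p = cb*cb*p by ring, show p*ca^2 = ca*ca*p by ring,
    show a^2 - p = a*a - p by ring, show b^2 - p = b*b - p by ring] at habs
  nlinarith [norm_nonneg (a*a - p), norm_nonneg (b*b - p), habs,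
    mul_lt_mul'' l1 l2 (norm_nonneg _) (norm_nonneg _)]

/-- The map `T(x,y) = (M(x,y), φ_{M(x,y)}(x))` is a bijection of
`𝔻 × 𝔻` onto itself, with inverse `(m,u) ↦ (φ_m(u), φ_m(-u))`, where `M` denotes the
geodesic midpoint map. -/
theorem stmt12 (M : ℂ → ℂ → ℂ)
    (hM : ∀ x ∈ Disc, ∀ y ∈ Disc, M x y ∈ Disc ∧ phi (M x y) x = -(phi (M x y) y)) :
    Set.BijOn (fun p : ℂ × ℂ => (M p.1 p.2, phi (M p.1 p.2) p.1))
        (Disc ×ˢ Disc) (Disc ×ˢ Disc) ∧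
      Set.InvOn (fun q : ℂ × ℂ => (phi q.1 q.2, phi q.1 (-q.2)))
        (fun p : ℂ × ℂ => (M p.1 p.2, phi (M p.1 p.2) p.1))
        (Disc ×ˢ Disc) (Disc ×ˢ Disc) := by
  set T : ℂ × ℂ → ℂ × ℂ := fun p => (M p.1 p.2, phi (M p.1 p.2) p.1) with hT
  set S : ℂ × ℂ → ℂ × ℂ := fun q => (phi q.1 q.2, phi q.1 (-q.2)) with hS
  have hmapsT : Set.MapsTo T (Disc ×ˢ Disc) (Disc ×ˢ Disc) := by
    rintro ⟨x, y⟩ ⟨hx, hy⟩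
    obtain ⟨hm, _⟩ := hM x hx y hy
    exact ⟨hm, phi_mem hm hx⟩
  have hmapsS : Set.MapsTo S (Disc ×ˢ Disc) (Disc ×ˢ Disc) := by
    rintro ⟨m, u⟩ ⟨hm, hu⟩
    have hu' : -u ∈ Disc := by
      show ‖-u‖ < 1
      rw [norm_neg]; exact hu
    exact ⟨phi_mem hm hu, phi_mem hm hu'⟩
  have hleft : Set.LeftInvOn S T (Disc ×ˢ Disc) := by
    rintro ⟨x, y⟩ ⟨hx, hy⟩
    obtain ⟨hm, heq⟩ := hM x hx y hy
    show (phi (M x y) (phi (M x y) x), phi (M x y) (-(phi (M x y) x))) = (x, y)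
    have e1 : phi (M x y) (phi (M x y) x) = x := phi_phi hm hx
    have e2 : phi (M x y) (-(phi (M x y) x)) = y := by
      rw [heq, neg_neg]; exact phi_phi hm hy
    rw [e1, e2]
  have hright : Set.RightInvOn S T (Disc ×ˢ Disc) := by
    rintro ⟨m, u⟩ ⟨hm, hu⟩
    have hu' : -u ∈ Disc := by
      show ‖-u‖ < 1
      rw [norm_neg]; exact hu
    set x := phi m u with hxdef
    set y := phi m (-u) with hydef
    have hx : x ∈ Disc := phi_mem hm hu
    have hy : y ∈ Disc := phi_mem hm hu'
    have hpx : phi m x = u := phi_phi hm hu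
    have hpy : phi m y = -u := phi_phi hm hu'
    obtain ⟨ha, heq⟩ := hM x hx y hy
    have hmeq : phi m x = -(phi m y) := by rw [hpx, hpy, neg_neg]
    have hab : M x y = m :=
      mp_unique12 ha hm hx hy (midpoint_eq ha hx hy heq) (midpoint_eq hm hx hy hmeq)
    show (M x y, phi (M x y) x) = (m, u)
    rw [hab, hpx]
  exact ⟨Set.InvOn.bijOn ⟨hleft, hright⟩ hmapsT hmapsS, hleft, hright⟩
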